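/- Let μ, ν, η ∈ 𝒫₂(ℝ^d) with η ≤ ν in the convex order and such that W₂²(μ,ν) = W₂²(μ,η) + ∫|y|² dν(y) − ∫|z|² dη(z). If μ(dx)q(x,dz) is a W₂-optimal coupling between μ and η and η(dz)m(z,dy) is any martingale coupling between η and ν, then the composition μ(dx)(qm)(x,dy), where qm(x,dy) = ∫_z q(x,dz)m(z,dy), is a W₂-optimal coupling between μ and ν. -/

import Mathlib

open MeasureTheory ProbabilityTheory Set Filter
open scoped ENNReal BoundedContinuousFunction
open scoped RealInnerProductSpace

noncomputable section

abbrev Ed (d : ℕ) := EuclideanSpace ℝ (Fin d)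

/-- π is a coupling of μ and ν. -/
def IsCoupling {d : ℕ} (π : Measure (Ed d × Ed d)) (μ ν : Measure (Ed d)) : Prop :=
  π.map Prod.fst = μ ∧ π.map Prod.snd = ν

/-- quadratic transport cost of a coupling. -/
def cost {d : ℕ} (π : Measure (Ed d × Ed d)) : ℝ := ∫ p, ‖p.2 - p.1‖ ^ 2 ∂π

/-- squared quadratic Wasserstein distance. -/
def W2sq {d : ℕ} (μ ν : Measure (Ed d)) : ℝ := sInf (cost '' {π | IsCoupling π μ ν})

/-- π is a W₂-optimal coupling between μ and ν. -/
def IsOptimalCoupling {d : ℕ} (π : Measure (Ed d × Ed d)) (μ ν : Measure (Ed d)) : Prop :=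
  IsCoupling π μ ν ∧ cost π = W2sq μ ν

/-- the coupling (Id, T)#μ given by a map T. -/
def givenByMap {d : ℕ} (μ : Measure (Ed d)) (T : Ed d → Ed d) : Measure (Ed d × Ed d) :=
  μ.map (fun x => (x, T x))

/-- finite second moment. -/
def FiniteSecondMoment {d : ℕ} (μ : Measure (Ed d)) : Prop :=
  Integrable (fun x => ‖x‖ ^ 2) μ

/-- convex order: ∫φ dη ≤ ∫φ dν for all convex φ whose integrals make sense. -/
def ConvexOrder {d : ℕ} (η ν : Measure (Ed d)) : Prop :=
  ∀ φ : Ed d → ℝ, ConvexOn ℝ Set.univ φ → Integrable φ η → Integrable φ ν →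
    ∫ x, φ x ∂η ≤ ∫ y, φ y ∂ν


section Aux
variable {α β γ : Type*} [MeasurableSpace α] [MeasurableSpace β] [MeasurableSpace γ]

lemma aux_map_snd_pair (μ : Measure α) [SFinite μ] (κ : Kernel α (β × γ)) [IsSFiniteKernel κ] :
    (μ.compProd κ).map (fun p => (p.1, p.2.2)) = μ.compProd (Kernel.snd κ) := by
  ext s hs
  rw [Measure.map_apply (measurable_fst.prodMk measurable_snd.snd) hs,
    Measure.compProd_apply (hs.preimage (measurable_fst.prodMk measurable_snd.snd)),
    Measure.compProd_apply hs]
  refine lintegral_congr fun x => ?_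
  rw [Kernel.snd_apply' _ _ (measurable_prodMk_left hs)]
  rfl

lemma aux_map_fst_pair (μ : Measure α) [SFinite μ] (κ : Kernel α (β × γ)) [IsSFiniteKernel κ] :
    (μ.compProd κ).map (fun p => (p.1, p.2.1)) = μ.compProd (Kernel.fst κ) := by
  ext s hs
  rw [Measure.map_apply (measurable_fst.prodMk measurable_snd.fst) hs,
    Measure.compProd_apply (hs.preimage (measurable_fst.prodMk measurable_snd.fst)),
    Measure.compProd_apply hs]
  refine lintegral_congr fun x => ?_
  rw [Kernel.fst_apply' _ _ (measurable_prodMk_left hs)]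
  rfl

lemma aux_map_snd (μ : Measure α) [SFinite μ] (κ : Kernel α β) [IsSFiniteKernel κ] :
    (μ.compProd κ).map Prod.snd = μ.bind κ := by
  ext s hs
  rw [Measure.map_apply measurable_snd hs, Measure.compProd_apply (measurable_snd hs),
    Measure.bind_apply hs (Kernel.measurable κ).aemeasurable]
  rfl
end Aux

/-- Composing an optimal coupling between μ and η with a martingale coupling between η and ν
yields an optimal coupling between μ and ν, when the Pythagorean identity holds. -/
theorem stmt5 {d : ℕ} (μ ν η : Measure (Ed d))
    [IsProbabilityMeasure μ] [IsProbabilityMeasure ν] [IsProbabilityMeasure η]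
    (hμ : FiniteSecondMoment μ) (hν : FiniteSecondMoment ν) (hη : FiniteSecondMoment η)
    (hcx : ConvexOrder η ν)
    (hW : W2sq μ ν = W2sq μ η + ∫ y, ‖y‖ ^ 2 ∂ν - ∫ z, ‖z‖ ^ 2 ∂η)
    (q : Kernel (Ed d) (Ed d)) [IsMarkovKernel q]
    (hq : IsOptimalCoupling (μ.compProd q) μ η)
    (m : Kernel (Ed d) (Ed d)) [IsMarkovKernel m]
    (hmInt : ∀ z, Integrable (fun y => y) (m z))
    (hmBar : ∀ z, ∫ y, y ∂(m z) = z)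
    (hmν : η.bind (fun z => m z) = ν) :
    IsOptimalCoupling (μ.compProd (m.comp q)) μ ν := by
  haveI : OpensMeasurableSpace (Ed d × Ed d × Ed d) := inferInstance
  set κ : Kernel (Ed d) (Ed d × Ed d) := q ⊗ₖ Kernel.prodMkLeft (Ed d) m with hκdef
  set τ : Measure (Ed d × (Ed d × Ed d)) := μ.compProd κ with hτdef
  have hcomp : m.comp q = Kernel.snd κ := Kernel.comp_eq_snd_compProd m q
  -- marginals
  have hμq_snd : μ.bind q = η := by rw [← aux_map_snd μ q]; exact hq.1.2
  have hsnd : (μ.compProd (m.comp q)).map Prod.snd = ν := by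
    rw [aux_map_snd]
    have hb : μ.bind (m.comp q) = (μ.bind q).bind m := by
      rw [Measure.bind_bind q.measurable.aemeasurable m.measurable.aemeasurable]
      exact congrArg μ.bind (funext fun a => Kernel.comp_apply m q a)
    rw [hb, hμq_snd]
    exact hmν
  have hfst : (μ.compProd (m.comp q)).map Prod.fst = μ := Measure.fst_compProd μ _
  have hcoupling : IsCoupling (μ.compProd (m.comp q)) μ ν := ⟨hfst, hsnd⟩
  -- relating π and (μ ⊗ₘ q) to τ
  have e₁meas : Measurable (fun p : Ed d × (Ed d × Ed d) => (p.1, p.2.1)) :=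
    measurable_fst.prodMk measurable_snd.fst
  have e₂meas : Measurable (fun p : Ed d × (Ed d × Ed d) => (p.1, p.2.2)) :=
    measurable_fst.prodMk measurable_snd.snd
  have hπτ : μ.compProd (m.comp q) = τ.map (fun p => (p.1, p.2.2)) := by
    rw [hτdef, aux_map_snd_pair, hcomp]
  have hqτ : μ.compProd q = τ.map (fun p => (p.1, p.2.1)) := by
    rw [hτdef, aux_map_fst_pair, hκdef, Kernel.fst_compProd]
  -- marginals of τ
  have hx_marg : τ.map Prod.fst = μ := Measure.fst_compProd μ κ
  have hz_marg : τ.map (fun p => p.2.1) = η := by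
    rw [show (fun p : Ed d × (Ed d × Ed d) => p.2.1) = Prod.snd ∘ (fun p => (p.1, p.2.1)) from rfl,
      ← Measure.map_map measurable_snd e₁meas, ← hqτ]
    exact hq.1.2
  have hy_marg : τ.map (fun p => p.2.2) = ν := by
    rw [show (fun p : Ed d × (Ed d × Ed d) => p.2.2) = Prod.snd ∘ (fun p => (p.1, p.2.2)) from rfl,
      ← Measure.map_map measurable_snd e₂meas, ← hπτ]
    exact hsnd
  -- second moments over τ
  have hnormsq_cont : Continuous (fun x : Ed d => ‖x‖ ^ 2) := continuous_norm.pow 2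
  have hx2 : Integrable (fun p : Ed d × (Ed d × Ed d) => ‖p.1‖ ^ 2) τ := by
    have h := hμ
    rw [← hx_marg] at h
    simpa [Function.comp_def] using
      (integrable_map_measure hnormsq_cont.aestronglyMeasurable measurable_fst.aemeasurable).mp h
  have hz2 : Integrable (fun p : Ed d × (Ed d × Ed d) => ‖p.2.1‖ ^ 2) τ := by
    have h := hη
    rw [← hz_marg] at h
    simpa [Function.comp_def] using
      (integrable_map_measure hnormsq_cont.aestronglyMeasurable
        measurable_snd.fst.aemeasurable).mp h
  have hy2 : Integrable (fun p : Ed d × (Ed d × Ed d) => ‖p.2.2‖ ^ 2) τ := by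
    have h := hν
    rw [← hy_marg] at h
    simpa [Function.comp_def] using
      (integrable_map_measure hnormsq_cont.aestronglyMeasurable
        measurable_snd.snd.aemeasurable).mp h
  -- integrability of the quadratic integrands
  have hyx : Integrable (fun p : Ed d × (Ed d × Ed d) => ‖p.2.2 - p.1‖ ^ 2) τ := by
    refine Integrable.mono' ((hy2.const_mul 2).add (hx2.const_mul 2))
      ((continuous_snd.snd.sub continuous_fst).norm.pow 2).aestronglyMeasurable
      (Eventually.of_forall fun p => ?_)
    simp only [Pi.add_apply]
    rw [Real.norm_eq_abs, abs_of_nonneg (by positivity)]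
    nlinarith [norm_sub_le p.2.2 p.1, sq_nonneg (‖p.2.2‖ - ‖p.1‖),
      norm_nonneg (p.2.2 - p.1), norm_nonneg p.2.2, norm_nonneg p.1]
  have hzx : Integrable (fun p : Ed d × (Ed d × Ed d) => ‖p.2.1 - p.1‖ ^ 2) τ := by
    refine Integrable.mono' ((hz2.const_mul 2).add (hx2.const_mul 2))
      ((continuous_snd.fst.sub continuous_fst).norm.pow 2).aestronglyMeasurable
      (Eventually.of_forall fun p => ?_)
    simp only [Pi.add_apply]
    rw [Real.norm_eq_abs, abs_of_nonneg (by positivity)]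
    nlinarith [norm_sub_le p.2.1 p.1, sq_nonneg (‖p.2.1‖ - ‖p.1‖),
      norm_nonneg (p.2.1 - p.1), norm_nonneg p.2.1, norm_nonneg p.1]
  have hJmeas : AEStronglyMeasurable
      (fun p : Ed d × (Ed d × Ed d) => ⟪p.1, p.2.2 - p.2.1⟫) τ :=
    (continuous_fst.inner (continuous_snd.snd.sub continuous_snd.fst)).aestronglyMeasurable
  have hJ_int : Integrable (fun p : Ed d × (Ed d × Ed d) => ⟪p.1, p.2.2 - p.2.1⟫) τ := by
    refine Integrable.mono' (hx2.add (hy2.add hz2)) hJmeas (Eventually.of_forall fun p => ?_)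
    simp only [Pi.add_apply]
    rw [Real.norm_eq_abs]
    have h1 := abs_real_inner_le_norm p.1 (p.2.2 - p.2.1)
    have h2 := norm_sub_le p.2.2 p.2.1
    nlinarith [norm_nonneg p.1, norm_nonneg p.2.2, norm_nonneg p.2.1,
      sq_nonneg (‖p.1‖ - ‖p.2.2‖), sq_nonneg (‖p.1‖ - ‖p.2.1‖),
      mul_le_mul_of_nonneg_left h2 (norm_nonneg p.1)]
  -- vanishing of the cross term
  have hJ : ∫ p, ⟪p.1, p.2.2 - p.2.1⟫ ∂τ = 0 := by
    have hae : ∀ᵐ x ∂μ, Integrable (fun w : Ed d × Ed d => ⟪x, w.2 - w.1⟫) (κ x) :=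
      ((Measure.integrable_compProd_iff hJmeas).mp hJ_int).1
    rw [hτdef, Measure.integral_compProd hJ_int]
    have h0 : ∀ᵐ x ∂μ, ∫ (w : Ed d × Ed d), ⟪x, w.2 - w.1⟫ ∂(κ x) = 0 := by
      filter_upwards [hae] with x hx
      rw [hκdef] at hx ⊢
      rw [ProbabilityTheory.integral_compProd hx]
      have hz0 : ∀ z, ∫ y, ⟪x, y - z⟫ ∂(m z) = 0 := by
        intro z
        have hinner : Integrable (fun y : Ed d => ⟪x, y⟫) (m z) := by
          simpa using (innerSL ℝ x).integrable_comp (hmInt z)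
        simp only [inner_sub_right]
        rw [integral_sub hinner (integrable_const _), integral_inner (hmInt z), hmBar z,
          integral_const]
        simp
      simp only [Kernel.prodMkLeft_apply]
      simp only [hz0, integral_zero]
    calc ∫ x, ∫ (w : Ed d × Ed d), ⟪x, w.2 - w.1⟫ ∂(κ x) ∂μ = ∫ _x, (0 : ℝ) ∂μ :=
          integral_congr_ae h0
      _ = 0 := integral_zero _ _
  -- transporting integrals to τ
  have hIz : ∫ p, ‖p.2.1‖ ^ 2 ∂τ = ∫ z, ‖z‖ ^ 2 ∂η := by
    rw [← hz_marg, integral_map measurable_snd.fst.aemeasurable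
      hnormsq_cont.aestronglyMeasurable]
  have hIy : ∫ p, ‖p.2.2‖ ^ 2 ∂τ = ∫ y, ‖y‖ ^ 2 ∂ν := by
    rw [← hy_marg, integral_map measurable_snd.snd.aemeasurable
      hnormsq_cont.aestronglyMeasurable]
  have hcostπ : cost (μ.compProd (m.comp q)) = ∫ p, ‖p.2.2 - p.1‖ ^ 2 ∂τ := by
    rw [cost, hπτ, integral_map e₂meas.aemeasurable (f := fun p : Ed d × Ed d => ‖p.2 - p.1‖ ^ 2)
      ((continuous_snd.sub continuous_fst).norm.pow 2).aestronglyMeasurable]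
  have hcostq : cost (μ.compProd q) = ∫ p, ‖p.2.1 - p.1‖ ^ 2 ∂τ := by
    rw [cost, hqτ, integral_map e₁meas.aemeasurable (f := fun p : Ed d × Ed d => ‖p.2 - p.1‖ ^ 2)
      ((continuous_snd.sub continuous_fst).norm.pow 2).aestronglyMeasurable]
  -- pointwise decomposition
  have hpt : ∀ p : Ed d × (Ed d × Ed d), ‖p.2.2 - p.1‖ ^ 2 =
      ‖p.2.1 - p.1‖ ^ 2 + (‖p.2.2‖ ^ 2 - ‖p.2.1‖ ^ 2 - 2 * ⟪p.1, p.2.2 - p.2.1⟫) := by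
    intro p
    rw [norm_sub_sq_real, norm_sub_sq_real, inner_sub_right,
      real_inner_comm p.2.2 p.1, real_inner_comm p.2.1 p.1]
    ring
  have hsum : ∫ p, ‖p.2.2 - p.1‖ ^ 2 ∂τ = (∫ p, ‖p.2.1 - p.1‖ ^ 2 ∂τ) +
      ((∫ p, ‖p.2.2‖ ^ 2 ∂τ) - (∫ p, ‖p.2.1‖ ^ 2 ∂τ) -
        2 * ∫ p, ⟪p.1, p.2.2 - p.2.1⟫ ∂τ) := by
    calc ∫ p, ‖p.2.2 - p.1‖ ^ 2 ∂τ
        = ∫ p, (‖p.2.1 - p.1‖ ^ 2 +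
            (‖p.2.2‖ ^ 2 - ‖p.2.1‖ ^ 2 - 2 * ⟪p.1, p.2.2 - p.2.1⟫)) ∂τ :=
          integral_congr_ae (Eventually.of_forall hpt)
      _ = _ := by
          have i2 : Integrable (fun p : Ed d × (Ed d × Ed d) =>
              ‖p.2.2‖ ^ 2 - ‖p.2.1‖ ^ 2) τ := hy2.sub hz2
          have i3 : Integrable (fun p : Ed d × (Ed d × Ed d) =>
              2 * ⟪p.1, p.2.2 - p.2.1⟫) τ := hJ_int.const_mul 2
          have i4 : Integrable (fun p : Ed d × (Ed d × Ed d) =>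
              ‖p.2.2‖ ^ 2 - ‖p.2.1‖ ^ 2 - 2 * ⟪p.1, p.2.2 - p.2.1⟫) τ := i2.sub i3
          rw [integral_add hzx i4, integral_sub i2 i3, integral_sub hy2 hz2,
            MeasureTheory.integral_const_mul]
  refine ⟨hcoupling, ?_⟩
  rw [hW, ← hq.2, hcostπ, hsum, hIy, hIz, hJ, hcostq]
  ring
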